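/- Let k ≥ 2 be an integer and let n_A, n_B be positive integers. Let V_AB be a real symmetric (2n_A+2n_B)×(2n_A+2n_B) matrix with block form V_AB = [[V_A, X],[Xᵀ, V_B]], where V_A is 2n_A×2n_A and V_B is 2n_B×2n_B. Then the following are equivalent: (i) there exists a real symmetric 2n_B×2n_B matrix Y such that the real symmetric (2n_A+2k·n_B)×(2n_A+2k·n_B) block matrix Ṽ, whose first block row is (V_A, X, X, …, X), and whose remaining k block rows have Xᵀ in the first column, V_B on the diagonal, and Y in all other positions, satisfies Ṽ ≥ iΩ_{n_A+k·n_B}; (ii) there exists a real symmetric 2n_B×2n_B matrix Δ with Δ ≥ iΩ_{n_B} and such that the complex Hermitian matrix V_AB − (iΩ_{n_A} ⊕ ((1−1/k)·Δ + (i/k)·Ω_{n_B})) is positive semidefinite. -/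

import Mathlib

open Matrix Complex ComplexOrder

/-- The standard symplectic form on `n` modes: block-diagonal with `n` blocks `[[0,1],[-1,0]]`. -/
noncomputable def OmegaM (n : ℕ) : Matrix (Fin (2*n)) (Fin (2*n)) ℝ :=
  Matrix.of fun i j =>
    if i.val + 1 = j.val ∧ i.val % 2 = 0 then (1 : ℝ)
    else if j.val + 1 = i.val ∧ j.val % 2 = 0 then -1 else 0

/-- Complexification of a real matrix. -/
noncomputable def cplx {m p : Type*} (M : Matrix m p ℝ) : Matrix m p ℂ :=
  M.map (fun x => (x : ℂ))

/-- The putative covariance matrix of a symmetric `k`-extension: first block row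
`(V_A, X, X, …, X)`, remaining block rows with `Xᵀ` in the first column, `V_B` on the
diagonal and `Y` elsewhere. -/
noncomputable def extMat (nA nB k : ℕ)
    (VA : Matrix (Fin (2*nA)) (Fin (2*nA)) ℝ)
    (X : Matrix (Fin (2*nA)) (Fin (2*nB)) ℝ)
    (VB Y : Matrix (Fin (2*nB)) (Fin (2*nB)) ℝ) :
    Matrix (Fin (2*nA) ⊕ Fin k × Fin (2*nB)) (Fin (2*nA) ⊕ Fin k × Fin (2*nB)) ℝ :=
  Matrix.of fun p q =>
    match p, q with
    | Sum.inl a, Sum.inl a' => VA a a'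
    | Sum.inl a, Sum.inr (_, b) => X a b
    | Sum.inr (_, b), Sum.inl a => X a b
    | Sum.inr (j, b), Sum.inr (j', b') => if j = j' then VB b b' else Y b b'

/-- The symplectic form `Ω_{n_A + k·n_B}` on system `A` together with `k` copies of `B`. -/
noncomputable def extOmega (nA nB k : ℕ) :
    Matrix (Fin (2*nA) ⊕ Fin k × Fin (2*nB)) (Fin (2*nA) ⊕ Fin k × Fin (2*nB)) ℝ :=
  Matrix.of fun p q =>
    match p, q with
    | Sum.inl a, Sum.inl a' => OmegaM nA a a'
    | Sum.inr (j, b), Sum.inr (j', b') => if j = j' then OmegaM nB b b' else 0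
    | _, _ => 0

open Finset

-- helper sums
lemma sum_ite_const {k : ℕ} (l : Fin k) (w y : ℂ) :
    ∑ l' : Fin k, (if l = l' then w else y) = w + ((k:ℂ) - 1) * y := by
  have h : ∀ l' : Fin k, (if l = l' then w else y) = (if l = l' then w - y else 0) + y := by
    intro l'; split <;> ring
  simp [h, Finset.sum_add_distrib, Finset.sum_ite_eq, Finset.card_univ]
  ring

lemma sum_ite_const' {k : ℕ} (l : Fin k) (w y : ℂ) :
    ∑ l' : Fin k, (if l' = l then w else y) = w + ((k:ℂ) - 1) * y := by
  have h : ∀ l' : Fin k, (if l' = l then w else y) = (if l' = l then w - y else 0) + y := by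
    intro l'; split <;> ring
  simp [h, Finset.sum_add_distrib, Finset.sum_ite_eq', Finset.card_univ]
  ring

lemma sum_dev {k : ℕ} (hk : (k:ℂ) ≠ 0) (j j' : Fin k) :
    ∑ l : Fin k, ((if l = j then 1 else 0) - (k:ℂ)⁻¹) * ((if l = j' then 1 else 0) - (k:ℂ)⁻¹)
      = (if j = j' then 1 else 0) - (k:ℂ)⁻¹ := by
  have h : ∀ l : Fin k,
      ((if l = j then 1 else 0) - (k:ℂ)⁻¹) * ((if l = j' then 1 else 0) - (k:ℂ)⁻¹)
      = (if l = j then (1:ℂ) else 0) * (if l = j' then 1 else 0)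
        - (k:ℂ)⁻¹ * (if l = j then 1 else 0) - (k:ℂ)⁻¹ * (if l = j' then 1 else 0)
        + (k:ℂ)⁻¹ * (k:ℂ)⁻¹ := by intro l; ring
  simp only [h, Finset.sum_add_distrib, Finset.sum_sub_distrib, ← Finset.mul_sum,
    Finset.sum_const, Finset.card_univ, Fintype.card_fin, nsmul_eq_mul, ite_mul, one_mul,
    zero_mul, Finset.sum_ite_eq, Finset.mem_univ, if_true]
  field_simp
  simp only [Finset.sum_ite_eq', Finset.mem_univ, if_true]
  ring

noncomputable def cvec (k : ℕ) (l : Fin k) : ℂ :=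
  if l.val = 0 then 1 else if l.val = 1 then -1 else 0

lemma sum_cvec {k : ℕ} (hk : 2 ≤ k) : ∑ l : Fin k, cvec k l = 0 := by
  rw [show (∑ l : Fin k, cvec k l) = ∑ i ∈ Finset.range k,
      (if i = 0 then (1:ℂ) else if i = 1 then -1 else 0) from ?_]
  · rw [← Finset.sum_subset (Finset.range_subset_range.mpr hk)]
    · simp [Finset.sum_range_succ]
    · intro x _ hx
      simp only [Finset.mem_range, not_lt] at hx
      have h0 : x ≠ 0 := by omega
      have h1 : x ≠ 1 := by omega
      simp [h0, h1]
  · rw [← Fin.sum_univ_eq_sum_range (fun i => if i = 0 then (1:ℂ) else if i = 1 then -1 else 0) k]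
    rfl

lemma sum_cvec_sq {k : ℕ} (hk : 2 ≤ k) : ∑ l : Fin k, cvec k l * cvec k l = 2 := by
  rw [show (∑ l : Fin k, cvec k l * cvec k l) = ∑ i ∈ Finset.range k,
      ((if i = 0 then (1:ℂ) else if i = 1 then -1 else 0)
        * (if i = 0 then (1:ℂ) else if i = 1 then -1 else 0)) from ?_]
  · rw [← Finset.sum_subset (Finset.range_subset_range.mpr hk)]
    · norm_num [Finset.sum_range_succ]
    · intro x _ hx
      simp only [Finset.mem_range, not_lt] at hx
      have h0 : x ≠ 0 := by omega
      have h1 : x ≠ 1 := by omega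
      simp [h0, h1]
  · rw [← Fin.sum_univ_eq_sum_range (fun i => (if i = 0 then (1:ℂ) else if i = 1 then -1 else 0)
        * (if i = 0 then (1:ℂ) else if i = 1 then -1 else 0)) k]
    rfl

lemma sum_cvec_pair {k : ℕ} (hk : 2 ≤ k) (w y : ℂ) :
    ∑ l : Fin k, ∑ l' : Fin k, cvec k l * cvec k l' * (if l = l' then w else y)
      = 2 * (w - y) := by
  have h : ∀ l l' : Fin k, cvec k l * cvec k l' * (if l = l' then w else y)
      = y * (cvec k l * cvec k l') + (if l = l' then cvec k l * cvec k l' * (w - y) else 0) := by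
    intro l l'; split <;> ring
  have h2 : ∀ l : Fin k,
      (∑ l' : Fin k, (y * (cvec k l * cvec k l')
        + (if l = l' then cvec k l * cvec k l' * (w - y) else 0)))
      = cvec k l * cvec k l * (w - y) := by
    intro l
    rw [Finset.sum_add_distrib]
    have : ∑ l' : Fin k, y * (cvec k l * cvec k l') = y * cvec k l * (∑ l' : Fin k, cvec k l') := by
      rw [Finset.mul_sum]; congr 1; ext l'; ring
    rw [this, sum_cvec hk]
    simp [Finset.sum_ite_eq]
  simp only [h, h2]
  rw [← Finset.sum_mul, sum_cvec_sq hk]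

noncomputable section GenAux
open Matrix

variable {A B : Type*} [Fintype A] [Fintype B] [DecidableEq A] [DecidableEq B]

def gBig (k : ℕ) (WA : Matrix A A ℂ) (Xc : Matrix A B ℂ) (W Yc : Matrix B B ℂ) :
    Matrix (A ⊕ Fin k × B) (A ⊕ Fin k × B) ℂ :=
  Matrix.of fun p q =>
    match p, q with
    | Sum.inl a, Sum.inl a' => WA a a'
    | Sum.inl a, Sum.inr jb => Xc a jb.2
    | Sum.inr jb, Sum.inl a => Xc a jb.2
    | Sum.inr jb, Sum.inr jb' => if jb.1 = jb'.1 then W jb.2 jb'.2 else Yc jb.2 jb'.2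

def gS (k : ℕ) (WA : Matrix A A ℂ) (Xc : Matrix A B ℂ) (W Yc : Matrix B B ℂ) :
    Matrix (A ⊕ B) (A ⊕ B) ℂ :=
  Matrix.of fun p q =>
    match p, q with
    | Sum.inl a, Sum.inl a' => WA a a'
    | Sum.inl a, Sum.inr b => Xc a b
    | Sum.inr b, Sum.inl a => Xc a b
    | Sum.inr b, Sum.inr b' => (k:ℂ)⁻¹ * W b b' + (1 - (k:ℂ)⁻¹) * Yc b b'

def gP1 (k : ℕ) : Matrix (A ⊕ B) (A ⊕ Fin k × B) ℂ :=
  Matrix.of fun p q =>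
    match p, q with
    | Sum.inl a, Sum.inl a' => if a = a' then 1 else 0
    | Sum.inr b, Sum.inr jb => if b = jb.2 then 1 else 0
    | _, _ => 0

def gP2 (k : ℕ) : Matrix (Fin k × B) (A ⊕ Fin k × B) ℂ :=
  Matrix.of fun p q =>
    match q with
    | Sum.inl _ => 0
    | Sum.inr jb => ((if p.1 = jb.1 then 1 else 0) - (k:ℂ)⁻¹) * (if p.2 = jb.2 then 1 else 0)

def gKD (k : ℕ) (D : Matrix B B ℂ) : Matrix (Fin k × B) (Fin k × B) ℂ :=
  Matrix.of fun p q => if p.1 = q.1 then D p.2 q.2 else 0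

def gQ2 (k : ℕ) : Matrix (A ⊕ Fin k × B) (A ⊕ B) ℂ :=
  Matrix.of fun p q =>
    match p, q with
    | Sum.inl a, Sum.inl a' => if a = a' then 1 else 0
    | Sum.inr jb, Sum.inr b' => if jb.2 = b' then (k:ℂ)⁻¹ else 0
    | _, _ => 0

def gQ1 (k : ℕ) : Matrix (A ⊕ Fin k × B) B ℂ :=
  Matrix.of fun p b' =>
    match p with
    | Sum.inl _ => 0
    | Sum.inr jb => cvec k jb.1 * (if jb.2 = b' then 1 else 0)

lemma L1 {k : ℕ} (hk : (k:ℂ) ≠ 0) (WA : Matrix A A ℂ) (Xc : Matrix A B ℂ)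
    (W Yc : Matrix B B ℂ) :
    gBig k WA Xc W Yc = (gP1 (A := A) (B := B) k)ᴴ * gS k WA Xc W Yc * gP1 (A := A) (B := B) k
      + (gP2 (A := A) (B := B) k)ᴴ * gKD k (W - Yc) * gP2 (A := A) (B := B) k := by
  ext p q
  rcases p with a | ⟨j, b⟩ <;> rcases q with a' | ⟨j', b'⟩ <;>
    simp [gBig, gS, gP1, gP2, gKD, Matrix.mul_apply, Matrix.conjTranspose_apply,
      Fintype.sum_sum_type, Fintype.sum_prod_type, ite_mul, mul_ite,
      Finset.sum_ite_eq, Finset.sum_ite_eq', apply_ite (star : ℂ → ℂ), star_sub, mul_comm]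
  have hsum : ∀ (c : ℂ), (∑ x : Fin k, c * ((if x = j then 1 else 0) - (k:ℂ)⁻¹)
      * ((if x = j' then 1 else 0) - (k:ℂ)⁻¹)) = c * ((if j = j' then 1 else 0) - (k:ℂ)⁻¹) := by
    intro c
    rw [← sum_dev hk j j', Finset.mul_sum]
    congr 1; ext x; ring
  rw [hsum]
  split <;> ring

lemma L2 {k : ℕ} (hk : (k:ℂ) ≠ 0) (WA : Matrix A A ℂ) (Xc : Matrix A B ℂ)
    (W Yc : Matrix B B ℂ) :
    gS k WA Xc W Yc = (gQ2 (A := A) (B := B) k)ᴴ * gBig k WA Xc W Yc * gQ2 (A := A) (B := B) k := by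
  have hk' : (k : ℕ) ≠ 0 := by exact_mod_cast fun h => hk (by simp [h])
  ext p q
  rcases p with a | b <;> rcases q with a' | b' <;>
    simp [gBig, gS, gQ2, Matrix.mul_apply, Matrix.conjTranspose_apply,
      Fintype.sum_sum_type, Fintype.sum_prod_type, ite_mul, mul_ite,
      Finset.sum_ite_eq, Finset.sum_ite_eq', apply_ite (star : ℂ → ℂ),
      apply_ite (starRingEnd ℂ), map_inv₀, map_natCast, mul_comm,
      Finset.sum_const, Finset.card_univ, nsmul_eq_mul]
  · field_simp
  · field_simp
  · simp only [sum_ite_const', Finset.sum_const, Finset.card_univ, Fintype.card_fin,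
      nsmul_eq_mul]
    field_simp

lemma sum_cvec_pair' {k : ℕ} (hk : 2 ≤ k) (w y : ℂ) :
    ∑ x : Fin k, ∑ x1 : Fin k, cvec k x1 * cvec k x * (if x1 = x then w else y)
      = 2 * (w - y) := by
  rw [Finset.sum_comm]
  exact sum_cvec_pair hk w y

lemma star_cvec {k : ℕ} (l : Fin k) : star (cvec k l) = cvec k l := by
  unfold cvec; split_ifs <;> simp

lemma L3 {k : ℕ} (hk2 : 2 ≤ k) (WA : Matrix A A ℂ) (Xc : Matrix A B ℂ)
    (W Yc : Matrix B B ℂ) :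
    (2:ℂ) • (W - Yc) = (gQ1 (A := A) (B := B) k)ᴴ * gBig k WA Xc W Yc * gQ1 (A := A) (B := B) k := by
  ext b b'
  simp [gBig, gQ1, Matrix.mul_apply, Matrix.conjTranspose_apply, Fintype.sum_sum_type,
    Fintype.sum_prod_type, ite_mul, mul_ite, Finset.sum_ite_eq, Finset.sum_ite_eq',
    star_mul', star_cvec, apply_ite (star : ℂ → ℂ), apply_ite (starRingEnd ℂ)]
  have conj_cvec : ∀ l : Fin k, (starRingEnd ℂ) (cvec k l) = cvec k l := fun l => star_cvec l
  simp only [conj_cvec]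
  have h1 : ∀ x : Fin k,
      (∑ x1 : Fin k, if x1 = x then cvec k x1 * W b b' else cvec k x1 * Yc b b') * cvec k x
      = ∑ x1 : Fin k, cvec k x1 * cvec k x * (if x1 = x then W b b' else Yc b b') := by
    intro x
    rw [Finset.sum_mul]
    congr 1; ext x1
    split <;> ring
  simp only [h1, sum_cvec_pair' hk2]

lemma gKD_posSemidef {k : ℕ} {D : Matrix B B ℂ} (hD : D.PosSemidef) :
    (gKD (B := B) k D).PosSemidef := by
  rw [Matrix.posSemidef_iff_dotProduct_mulVec]
  constructor
  · ext p q
    rcases p with ⟨j, b⟩; rcases q with ⟨j', b'⟩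
    have hH := congrFun (congrFun hD.1 b) b'
    simp only [Matrix.conjTranspose_apply, gKD, Matrix.of_apply] at hH ⊢
    rcases eq_or_ne j j' with h | h
    · simp [h, hH]
    · simp [h, Ne.symm h]
  · intro x
    have key : dotProduct (star x) ((gKD k D) *ᵥ x)
        = ∑ j : Fin k, dotProduct (star fun b => x (j, b)) (D *ᵥ fun b => x (j, b)) := by
      simp only [dotProduct, Matrix.mulVec, Pi.star_apply, Fintype.sum_prod_type, gKD,
        Matrix.of_apply, dotProduct, ite_mul, zero_mul, mul_ite, mul_zero]
      congr 1; ext j; congr 1; ext b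
      rw [Finset.mul_sum]
      simp [Finset.sum_ite_eq', Finset.mul_sum]
    rw [key]
    exact Finset.sum_nonneg fun j _ => hD.dotProduct_mulVec_nonneg _

lemma posSemidef_of_two_smul {n : Type*} [Fintype n] {M : Matrix n n ℂ}
    (h : ((2:ℂ) • M).PosSemidef) : M.PosSemidef := by
  rw [Matrix.posSemidef_iff_dotProduct_mulVec]
  constructor
  · have h1 := h.1
    rw [Matrix.IsHermitian, Matrix.conjTranspose_smul] at h1
    have h2 : (2:ℂ) • Mᴴ = (2:ℂ) • M := by simpa using h1
    exact smul_right_injective _ (two_ne_zero) h2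
  · intro x
    have h2 := h.dotProduct_mulVec_nonneg x
    rw [Matrix.smul_mulVec, dotProduct_smul, smul_eq_mul] at h2
    rw [Complex.le_def] at h2 ⊢
    simp only [Complex.mul_re, Complex.mul_im, Complex.zero_re, Complex.zero_im] at h2 ⊢
    norm_num at h2
    exact ⟨by linarith [h2.1], by linarith [h2.2]⟩

end GenAux

set_option linter.unusedSectionVars false

section MainAux
open Matrix

lemma cplx_sub {m : Type*} (M N : Matrix m m ℝ) : cplx (M - N) = cplx M - cplx N := by
  ext i j; simp [cplx]

end MainAux

/-- A bipartite Gaussian covariance matrix admits a (Gaussian, symmetric) `k`-extension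
if and only if the semidefinite feasibility criterion holds. -/
theorem gaussian_k_extendibility_iff_SDP
    (k nA nB : ℕ) (hk : 2 ≤ k) (hnA : 0 < nA) (hnB : 0 < nB)
    (VA : Matrix (Fin (2*nA)) (Fin (2*nA)) ℝ)
    (X : Matrix (Fin (2*nA)) (Fin (2*nB)) ℝ)
    (VB : Matrix (Fin (2*nB)) (Fin (2*nB)) ℝ)
    (hVA : VA.IsSymm) (hVB : VB.IsSymm) :
    (∃ Y : Matrix (Fin (2*nB)) (Fin (2*nB)) ℝ, Y.IsSymm ∧
        (cplx (extMat nA nB k VA X VB Y)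
          - Complex.I • cplx (extOmega nA nB k)).PosSemidef)
    ↔
    (∃ Δ : Matrix (Fin (2*nB)) (Fin (2*nB)) ℝ, Δ.IsSymm ∧
        (cplx Δ - Complex.I • cplx (OmegaM nB)).PosSemidef ∧
        (cplx (Matrix.fromBlocks VA X Xᵀ VB) -
          Matrix.fromBlocks (Complex.I • cplx (OmegaM nA)) 0 0
            ((1 - 1/(k:ℂ)) • cplx Δ
              + (Complex.I/(k:ℂ)) • cplx (OmegaM nB))).PosSemidef) := by
  classical
  have hkC : ((k : ℕ) : ℂ) ≠ 0 := Nat.cast_ne_zero.mpr (by omega)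
  set WA : Matrix (Fin (2*nA)) (Fin (2*nA)) ℂ := cplx VA - Complex.I • cplx (OmegaM nA) with hWA
  set W : Matrix (Fin (2*nB)) (Fin (2*nB)) ℂ := cplx VB - Complex.I • cplx (OmegaM nB) with hW
  have idBig : ∀ Y : Matrix (Fin (2*nB)) (Fin (2*nB)) ℝ,
      cplx (extMat nA nB k VA X VB Y) - Complex.I • cplx (extOmega nA nB k)
        = gBig k WA (cplx X) W (cplx Y) := by
    intro Y
    ext p q
    rcases p with a | ⟨j, b⟩ <;> rcases q with a' | ⟨j', b'⟩ <;>
      simp [gBig, cplx, extMat, extOmega, Matrix.sub_apply, Matrix.smul_apply,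
        Matrix.map_apply, smul_eq_mul, hWA, hW]
    split <;> simp
  have idS : ∀ Δ : Matrix (Fin (2*nB)) (Fin (2*nB)) ℝ,
      (cplx (Matrix.fromBlocks VA X Xᵀ VB) -
        Matrix.fromBlocks (Complex.I • cplx (OmegaM nA)) 0 0
          ((1 - 1/(k:ℂ)) • cplx Δ + (Complex.I/(k:ℂ)) • cplx (OmegaM nB)))
        = gS k WA (cplx X) W (cplx VB - cplx Δ) := by
    intro Δ
    ext p q
    rcases p with a | b <;> rcases q with a' | b' <;>
      simp [gS, cplx, Matrix.fromBlocks, Matrix.sub_apply, Matrix.smul_apply,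
        Matrix.map_apply, smul_eq_mul, hWA, hW, Matrix.transpose_apply]
    · ring
  have idD : ∀ Δ : Matrix (Fin (2*nB)) (Fin (2*nB)) ℝ,
      cplx Δ - Complex.I • cplx (OmegaM nB) = W - (cplx VB - cplx Δ) := by
    intro Δ; rw [hW]; abel
  constructor
  · rintro ⟨Y, hY, hPSD⟩
    rw [idBig Y] at hPSD
    refine ⟨VB - Y, hVB.sub hY, ?_, ?_⟩
    · rw [idD (VB - Y), cplx_sub]
      have h2 := hPSD.conjTranspose_mul_mul_same (gQ1 k)
      rw [← L3 hk WA (cplx X) W (cplx Y)] at h2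
      have h3 := posSemidef_of_two_smul h2
      convert h3 using 1
      abel
    · rw [idS (VB - Y), cplx_sub]
      have h2 := hPSD.conjTranspose_mul_mul_same (gQ2 k)
      rw [← L2 hkC WA (cplx X) W (cplx Y)] at h2
      convert h2 using 2
      abel
  · rintro ⟨Δ, hΔ, hDpsd, hSpsd⟩
    refine ⟨VB - Δ, hVB.sub hΔ, ?_⟩
    rw [idBig (VB - Δ), cplx_sub, L1 hkC WA (cplx X) W (cplx VB - cplx Δ)]
    rw [idS Δ] at hSpsd
    rw [idD Δ] at hDpsd
    exact (hSpsd.conjTranspose_mul_mul_same (gP1 k)).add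
      ((gKD_posSemidef hDpsd).conjTranspose_mul_mul_same (gP2 k))
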